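/- Let r(-s) = 2/(s²+2s+2). For every integer J ≥ 2, sup_{s ∈ (0,∞)} |((1+s)·r(-s/J)^J - 1)/s| ≤ 0.31. -/

import Mathlib

set_option maxHeartbeats 1000000

open Real

private lemma expUB3 (x : ℝ) (h0 : 0 ≤ x) (h1 : x ≤ 1) :
    exp x ≤ 1 + x + x^2/2 + (2/9)*x^3 := by
  have h := Real.exp_bound' h0 h1 (n := 3) (by norm_num)
  norm_num [Finset.sum_range_succ, Nat.factorial] at h
  linarith

private lemma exp04 : exp (2/5 : ℝ) ≤ 373/250 := by
  have h := Real.exp_bound' (x := (2/5:ℝ)) (by norm_num) (by norm_num) (n := 4) (by norm_num)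
  norm_num [Finset.sum_range_succ, Nat.factorial] at h
  linarith

private lemma exB (k : ℕ) (s : ℝ) (h1 : 2/5*k ≤ s) (h2 : s ≤ 2/5*(k+1)) :
    exp s ≤ (373/250)^k * (1 + (s - 2/5*k) + (s - 2/5*k)^2/2 + (2/9)*(s - 2/5*k)^3) := by
  have hk : exp (2/5*(k:ℝ)) ≤ (373/250)^k := by
    rw [show (2/5*(k:ℝ)) = (k:ℝ)*(2/5) by ring, Real.exp_nat_mul]
    exact pow_le_pow_left₀ (exp_pos _).le exp04 k
  have hx : exp s = exp (2/5*(k:ℝ)) * exp (s - 2/5*k) := by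
    rw [← Real.exp_add]; ring_nf
  rw [hx]
  have hb := expUB3 (s - 2/5*k) (by linarith) (by linarith)
  have hbpos : (0:ℝ) ≤ 1 + (s - 2/5*k) + (s - 2/5*k)^2/2 + (2/9)*(s - 2/5*k)^3 := by nlinarith [sq_nonneg (s - 2/5*k)]
  exact mul_le_mul hk hb (exp_pos _).le (by positivity)

private lemma keyExp (s : ℝ) (hs : 0 < s) : 1 - 31/100*s ≤ (1 + s) * exp (-s) := by
  rcases le_or_gt (1 - 31/100*s) 0 with h | h
  · exact h.trans (by positivity)
  · have hs31 : s < 100/31 := by linarith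
    have key : (1 - 31/100*s) * exp s ≤ 1 + s := by
      rcases le_or_gt s (2/5) with h1 | h1
      · have hb := exB 0 s (by norm_num; linarith) (by norm_num; linarith)
        norm_num at hb
        nlinarith [sq_nonneg s, sq_nonneg (s - 2/5)]
      rcases le_or_gt s (4/5) with h2 | h2
      · have hb := exB 1 s (by norm_num; linarith) (by norm_num; linarith)
        norm_num at hb
        nlinarith [sq_nonneg (s - 2/5), sq_nonneg (s - 4/5)]
      rcases le_or_gt s (6/5) with h3 | h3
      · have hb := exB 2 s (by norm_num; linarith) (by norm_num; linarith)
        norm_num at hb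
        nlinarith [sq_nonneg (s - 4/5), sq_nonneg (s - 6/5)]
      rcases le_or_gt s (8/5) with h4 | h4
      · have hb := exB 3 s (by norm_num; linarith) (by norm_num; linarith)
        norm_num at hb
        nlinarith [sq_nonneg (s - 6/5), sq_nonneg (s - 8/5)]
      rcases le_or_gt s (2 : ℝ) with h5 | h5
      · have hb := exB 4 s (by norm_num; linarith) (by norm_num; linarith)
        norm_num at hb
        nlinarith [sq_nonneg (s - 8/5), sq_nonneg (s - 2)]
      rcases le_or_gt s (12/5) with h6 | h6
      · have hb := exB 5 s (by norm_num; linarith) (by norm_num; linarith)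
        norm_num at hb
        nlinarith [sq_nonneg (s - 2), sq_nonneg (s - 12/5)]
      rcases le_or_gt s (14/5) with h7 | h7
      · have hb := exB 6 s (by norm_num; linarith) (by norm_num; linarith)
        norm_num at hb
        nlinarith [sq_nonneg (s - 12/5), sq_nonneg (s - 14/5)]
      rcases le_or_gt s (16/5) with h8 | h8
      · have hb := exB 7 s (by norm_num; linarith) (by norm_num; linarith)
        norm_num at hb
        nlinarith [sq_nonneg (s - 14/5), sq_nonneg (s - 16/5)]
      · have hb := exB 8 s (by norm_num; linarith) (by norm_num; linarith)
        norm_num at hb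
        nlinarith [sq_nonneg (s - 16/5), sq_nonneg (s - 100/31)]
    rw [Real.exp_neg, ← div_eq_mul_inv, le_div_iff₀ (exp_pos s)]
    linarith
    
theorem stmt_11 (J : ℕ) (hJ : 2 ≤ J) (s : ℝ) (hs : 0 < s) :
    |((1 + s) * (2 / ((s / J) ^ 2 + 2 * (s / J) + 2)) ^ J - 1) / s| ≤ 0.31 := by
  have hJ2 : (2:ℝ) ≤ (J:ℝ) := by exact_mod_cast hJ
  have hJ0 : (0:ℝ) < (J:ℝ) := by linarith
  set t : ℝ := s / J with ht
  have htpos : 0 < t := div_pos hs hJ0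
  have hts : (J:ℝ) * t = s := by rw [ht]; field_simp
  have hD : (0:ℝ) < t^2 + 2*t + 2 := by nlinarith [sq_nonneg (t+1)]
  have h1t : (0:ℝ) < 1 + t := by linarith
  set r : ℝ := 2 / (t^2 + 2*t + 2) with hr
  have hr0 : 0 < r := by positivity
  -- upper bound
  have hru : r ≤ 1/(1+t) := by
    rw [hr, div_le_div_iff₀ hD h1t]; nlinarith [sq_nonneg t]
  have hBer : (1:ℝ) + s ≤ (1+t)^J := by
    have := one_add_mul_le_pow (by linarith : (-2:ℝ) ≤ t) J
    rw [hts] at this; linarith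
  have hp : (0:ℝ) < (1+t)^J := pow_pos h1t J
  have hup : (1+s) * r^J ≤ 1 := by
    have h1 : r^J ≤ (1/(1+t))^J := pow_le_pow_left₀ hr0.le hru J
    have h2 : ((1:ℝ)/(1+t))^J = 1/(1+t)^J := by rw [div_pow, one_pow]
    have h3 : (1+s) * r^J ≤ (1+s) * (1/(1+t)^J) := by
      rw [← h2]; exact mul_le_mul_of_nonneg_left h1 (by linarith)
    have h4 : (1+s) * (1/(1+t)^J) ≤ 1 := by
      rw [mul_one_div, div_le_one hp]; exact hBer
    linarith
  -- lower bound
  have hre : exp (-t) ≤ r := by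
    have hq := Real.quadratic_le_exp_of_nonneg htpos.le
    rw [Real.exp_neg, hr]
    rw [inv_eq_one_div, div_le_div_iff₀ (exp_pos t) hD]
    nlinarith
  have hlowpow : exp (-s) ≤ r^J := by
    have h1 : exp (-t)^J ≤ r^J := pow_le_pow_left₀ (exp_pos _).le hre J
    have h2 : exp (-t)^J = exp (-s) := by
      rw [← Real.exp_nat_mul, mul_neg, hts]
    linarith [h1, h2.symm.le]
  have hlow : 1 - 31/100*s ≤ (1+s) * r^J := by
    have h1 := keyExp s hs
    have h2 : (1+s) * exp (-s) ≤ (1+s) * r^J :=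
      mul_le_mul_of_nonneg_left hlowpow (by linarith)
    linarith
  -- conclude
  have h031 : (0.31:ℝ) = 31/100 := by norm_num
  rw [abs_div, abs_of_pos hs, div_le_iff₀ hs, h031]
  rw [abs_le]
  constructor <;> nlinarith
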